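/- Let M be a limited preference model and A a finite set of formulas. Then every formula α ∈ A that is satisfiable in M is satisfied by some element of MaxSeq(M, W, A): the maximal-chain selection from the full set of worlds covers all satisfiable conditions. -/

import Mathlib

/-- Formulas of Åqvist's dyadic deontic language. -/
inductive PForm (V : Type) : Type
  | var : V → PForm V
  | neg : PForm V → PForm V
  | conj : PForm V → PForm V → PForm V
  | box : PForm V → PForm V
  | ob : PForm V → PForm V → PForm V   -- `ob γ α` is ◯(γ/α)

/-- Strict version of a binary relation: `a ≻ b` iff `a ⪰ b` and `¬ b ⪰ a`. -/
def strictRel {W : Type} (r : W → W → Prop) (a b : W) : Prop := r a b ∧ ¬ r b a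

/-- ≻-maximal elements of a set `U`. -/
def maxSet {W : Type} (r : W → W → Prop) (U : Set W) : Set W :=
  {v | v ∈ U ∧ ¬ ∃ u ∈ U, strictRel r u v}

/-- A preference model. -/
structure PrefModel (V : Type) : Type 1 where
  W : Type
  rel : W → W → Prop
  val : V → Set W

/-- Truth set of a formula in a preference model. -/
def truthSet {V : Type} (M : PrefModel V) : PForm V → Set M.W
  | .var x => M.val x
  | .neg ψ => (truthSet M ψ)ᶜ
  | .conj ψ₁ ψ₂ => truthSet M ψ₁ ∩ truthSet M ψ₂
  | .box β => {_w | truthSet M β = Set.univ}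
  | .ob γ α => {_w | maxSet M.rel (truthSet M α) ⊆ truthSet M γ}

/-- A model validates a formula when it is true at all worlds. -/
def valid {V : Type} (M : PrefModel V) (φ : PForm V) : Prop :=
  truthSet M φ = Set.univ

/-- Limitedness of a preference model. -/
def Limited {V : Type} (M : PrefModel V) : Prop :=
  ∀ α : PForm V, (truthSet M α).Nonempty → (maxSet M.rel (truthSet M α)).Nonempty

/-- Smoothness of a preference model. -/
def SmoothModel {V : Type} (M : PrefModel V) : Prop :=
  ∀ (α : PForm V) (w : M.W), w ∈ truthSet M α →
    ∃ u ∈ maxSet M.rel (truthSet M α), u = w ∨ strictRel M.rel u w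

/-- Subformulas of a formula (including the formula itself). -/
def Subf {V : Type} : PForm V → Set (PForm V)
  | .var x => {.var x}
  | .neg ψ => insert (.neg ψ) (Subf ψ)
  | .conj ψ₁ ψ₂ => insert (.conj ψ₁ ψ₂) (Subf ψ₁ ∪ Subf ψ₂)
  | .box β => insert (.box β) (Subf β)
  | .ob γ α => insert (.ob γ α) (Subf γ ∪ Subf α)

open scoped Classical in
/-- The iterative selection of maximal worlds for disjunctions of remaining conditions. -/
noncomputable def maxSeq {V : Type} (M : PrefModel V) (rep : Set M.W → M.W)
    (hrep : ∀ S : Set M.W, S.Nonempty → rep S ∈ S)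
    (U : Set M.W) (A : Finset (PForm V)) : List M.W :=
  if h : (U ∩ maxSet M.rel (⋃ α ∈ A, truthSet M α)).Nonempty then
    rep (U ∩ maxSet M.rel (⋃ α ∈ A, truthSet M α)) ::
      maxSeq M rep hrep U
        (A.filter fun α =>
          rep (U ∩ maxSet M.rel (⋃ α ∈ A, truthSet M α)) ∉ truthSet M α)
  else []
termination_by A.card
decreasing_by
  have hz := hrep _ h
  have hz2 : rep (U ∩ maxSet M.rel (⋃ α ∈ A, truthSet M α)) ∈ ⋃ α ∈ A, truthSet M α :=
    hz.2.1
  simp only [Set.mem_iUnion] at hz2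
  obtain ⟨α₀, hα₀A, hα₀⟩ := hz2
  exact Finset.card_lt_card
    (Finset.filter_ssubset.mpr ⟨α₀, hα₀A, by simp [hα₀]⟩)


def porm {V : Type} (p q : PForm V) : PForm V := .neg (.conj (.neg p) (.neg q))

lemma truth_por {V : Type} (M : PrefModel V) (p q : PForm V) :
    truthSet M (porm p q) = truthSet M p ∪ truthSet M q := by
  simp [porm, truthSet, Set.compl_inter, compl_compl]

lemma exists_disj {V : Type} (M : PrefModel V) (A : Finset (PForm V)) (hA : A.Nonempty) :
    ∃ φ : PForm V, truthSet M φ = ⋃ α ∈ A, truthSet M α := by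
  classical
  induction A using Finset.induction_on with
  | empty => exact absurd hA (by simp)
  | @insert a A ha ih =>
    rcases Finset.eq_empty_or_nonempty ‹Finset _› with rfl | hA'
    · exact ⟨a, by simp⟩
    · obtain ⟨ψ, hψ⟩ := ih hA'
      exact ⟨porm a ψ, by rw [truth_por, hψ, Finset.set_biUnion_insert]⟩

lemma stmt15_aux {V : Type} (M : PrefModel V) (hlim : Limited M)
    (rep : Set M.W → M.W) (hrep : ∀ S : Set M.W, S.Nonempty → rep S ∈ S) :
    ∀ n (A : Finset (PForm V)), A.card = n → ∀ α ∈ A, (truthSet M α).Nonempty →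
    ∃ z ∈ maxSeq M rep hrep Set.univ A, z ∈ truthSet M α := by
  intro n
  induction n using Nat.strong_induction_on with
  | _ n ih =>
    classical
    intro A hcard α hα hsat
    obtain ⟨φ, hφ⟩ := exists_disj M A ⟨α, hα⟩
    have hUnion : (⋃ β ∈ A, truthSet M β).Nonempty := by
      obtain ⟨w, hw⟩ := hsat
      exact ⟨w, Set.mem_biUnion hα hw⟩
    have hmax : (Set.univ ∩ maxSet M.rel (⋃ β ∈ A, truthSet M β)).Nonempty := by
      rw [Set.univ_inter, ← hφ]
      exact hlim φ (hφ ▸ hUnion)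
    rw [maxSeq, dif_pos hmax]
    set z := rep (Set.univ ∩ maxSet M.rel (⋃ β ∈ A, truthSet M β)) with hz
    by_cases hzα : z ∈ truthSet M α
    · exact ⟨z, List.mem_cons_self, hzα⟩
    · have hzmem := hrep _ hmax
      have hz2 : z ∈ ⋃ β ∈ A, truthSet M β := hzmem.2.1
      simp only [Set.mem_iUnion] at hz2
      obtain ⟨α₀, hα₀A, hα₀⟩ := hz2
      set A' := A.filter (fun β => z ∉ truthSet M β) with hA'
      have hlt : A'.card < A.card :=
        Finset.card_lt_card (Finset.filter_ssubset.mpr ⟨α₀, hα₀A, by simp [hα₀]⟩)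
      have hαA' : α ∈ A' := Finset.mem_filter.mpr ⟨hα, hzα⟩
      obtain ⟨z', hz'mem, hz'α⟩ := ih A'.card (hcard ▸ hlt) A' rfl α hαA' hsat
      exact ⟨z', List.mem_cons_of_mem _ hz'mem, hz'α⟩

/-- In a limited model, every formula of `A` satisfiable in `M` is satisfied by some
element of the maximal chain selected from all worlds. -/
theorem stmt15 {V : Type} (M : PrefModel V) (hlim : Limited M)
    (rep : Set M.W → M.W) (hrep : ∀ S : Set M.W, S.Nonempty → rep S ∈ S)
    (A : Finset (PForm V)) (α : PForm V) (hα : α ∈ A)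
    (hsat : (truthSet M α).Nonempty) :
    ∃ z ∈ maxSeq M rep hrep Set.univ A, z ∈ truthSet M α := by
  exact stmt15_aux M hlim rep hrep A.card A rfl α hα hsat
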